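/- Closed form of the robust-conformal function g for the total variation distance: let ε > 0 and let f(z) := (1/2)|z − 1|. Then for every β ∈ (0,1), g(β) := inf{z ∈ [0,1] : β·f(z/β) + (1−β)·f((1−z)/(1−β)) ≤ ε} = max(0, β − ε). -/

import Mathlib

open MeasureTheory ProbabilityTheory

/-- Empirical quantile of the scores `r^(1),...,r^(K)` at level `β`:
`Quantile_β(r) := inf {z | β ≤ #{i : r i ≤ z} / K}` (computed in the extended
reals, so that the quantile is `+∞` exactly when the defining set is empty). -/
noncomputable def quantile {K : ℕ} (β : ℝ) (r : Fin K → EReal) : EReal :=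
  sInf {z : EReal | β ≤ (Nat.card {i : Fin K // r i ≤ z} : ℝ) / K}

/-- The f-divergence `D_f(P,Q) := ∫ f (dP/dQ) dQ`. -/
noncomputable def fDiv {α : Type*} [MeasurableSpace α] (f : ℝ → ℝ)
    (P Q : Measure α) : ℝ :=
  ∫ a, f ((P.rnDeriv Q a).toReal) ∂Q

/-- The function `g(β) := inf {z ∈ [0,1] | β f(z/β) + (1-β) f((1-z)/(1-β)) ≤ ε}`
from robust conformal prediction. -/
noncomputable def gfun (f : ℝ → ℝ) (ε β : ℝ) : ℝ :=
  sInf {z : ℝ | z ∈ Set.Icc 0 1 ∧ β * f (z / β) + (1 - β) * f ((1 - z) / (1 - β)) ≤ ε}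

/-- The generalized inverse `g⁻¹(τ) := sup {β ∈ [0,1] | g(β) ≤ τ}`. -/
noncomputable def gInv (f : ℝ → ℝ) (ε τ : ℝ) : ℝ :=
  sSup {β : ℝ | β ∈ Set.Icc 0 1 ∧ gfun f ε β ≤ τ}

/-- `δ_n := 1 - g((1 + 1/K) g⁻¹(1 - δ))`. -/
noncomputable def deltaN (f : ℝ → ℝ) (ε δ : ℝ) (K : ℕ) : ℝ :=
  1 - gfun f ε ((1 + 1 / K) * gInv f ε (1 - δ))

/-- `δ̃ := 1 - g⁻¹(1 - δ_n)`. -/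
noncomputable def deltaTilde (f : ℝ → ℝ) (ε δ : ℝ) (K : ℕ) : ℝ :=
  1 - gInv f ε (1 - deltaN f ε δ K)

/-- **Closed form of the robust-conformal function `g` for the total variation
distance**: for `ε > 0` and `f(z) = (1/2)|z-1|`, for every `β ∈ (0,1)`,
`g(β) = max(0, β - ε)`. -/
theorem gfun_totalVariation_closed_form (ε : ℝ) (hε : 0 < ε)
    (β : ℝ) (hβ : β ∈ Set.Ioo (0 : ℝ) 1) :
    gfun (fun z => (1 / 2) * |z - 1|) ε β = max 0 (β - ε) := by
  obtain ⟨hβ0, hβ1⟩ := hβ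
  have h1β : (0:ℝ) < 1 - β := by linarith
  have hset : {z : ℝ | z ∈ Set.Icc 0 1 ∧
      β * ((1:ℝ) / 2 * |z / β - 1|) + (1 - β) * ((1:ℝ) / 2 * |(1 - z) / (1 - β) - 1|) ≤ ε}
      = Set.Icc (max 0 (β - ε)) (min 1 (β + ε)) := by
    ext z
    have e1 : β * ((1:ℝ) / 2 * |z / β - 1|) = (1 / 2) * |z - β| := by
      rw [show z / β - 1 = (z - β) / β by field_simp, abs_div, abs_of_pos hβ0]
      field_simp
    have e2 : (1 - β) * ((1:ℝ) / 2 * |(1 - z) / (1 - β) - 1|) = (1 / 2) * |z - β| := by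
      rw [show (1 - z) / (1 - β) - 1 = (β - z) / (1 - β) by field_simp; ring,
        abs_div, abs_of_pos h1β, abs_sub_comm]
      field_simp
    simp only [Set.mem_setOf_eq, Set.mem_Icc, e1, e2,
      show (1:ℝ)/2 * |z - β| + 1/2 * |z - β| = |z - β| by ring, abs_le,
      max_le_iff, le_min_iff]
    constructor
    · rintro ⟨⟨h0, h1⟩, h2, h3⟩
      exact ⟨⟨h0, by linarith⟩, h1, by linarith⟩
    · rintro ⟨⟨h0, h1⟩, h2, h3⟩
      exact ⟨⟨h0, h2⟩, by linarith, by linarith⟩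
  have hle : max 0 (β - ε) ≤ min 1 (β + ε) :=
    max_le (le_min zero_le_one (by linarith)) (le_min (by linarith) (by linarith))
  rw [gfun]
  simp only [hset]
  exact csInf_Icc hle
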